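/- Let $X \sim \mathrm{Beta}(\alpha,\beta)$ with $\alpha,\beta \ge 1$ and $p = \alpha/(\alpha+\beta)$. Then for any $\varepsilon \in (0, p)$, $\Pr(X \le p - \varepsilon) \le \exp(-2(\alpha+\beta-1)\varepsilon^2)$. -/

import Mathlib

open MeasureTheory Real

/-- The density of the Beta distribution with parameters `a`, `b` on `(0,1)`. -/
noncomputable def betaPDFReal (a b x : ℝ) : ℝ :=
  if x ∈ Set.Ioo (0 : ℝ) 1 then
    (Real.Gamma (a + b) / (Real.Gamma a * Real.Gamma b)) * x ^ (a - 1) * (1 - x) ^ (b - 1)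
  else 0

/-- The Beta distribution with parameters `a`, `b`. -/
noncomputable def betaMeasure (a b : ℝ) : Measure ℝ :=
  volume.withDensity (fun x => ENNReal.ofReal (betaPDFReal a b x))

section Aux

lemma star_ineq (a b p ε : ℝ) (ha : 1 ≤ a) (hb : 1 ≤ b)
    (hp : p = a / (a + b)) (hε0 : 0 < ε) (hεp : ε < p) (hp1 : p < 1) :
    2 * (a + b - 1) * ε ^ 2 ≤
      a * (log p - log (p - ε)) + (b - 1) * (log (1 - p) - log (1 - p + ε)) := by
  have hab : 0 < a + b := by linarith
  have hpa : p * (a + b) = a := by rw [hp]; field_simp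
  set φ : ℝ → ℝ := fun x =>
    a * (log p - log (p - x)) + (b - 1) * (log (1 - p) - log (1 - p + x))
      - 2 * (a + b - 1) * x ^ 2 with hφ
  have hder : ∀ x ∈ Set.Icc (0:ℝ) ε, HasDerivAt φ
      (a * (p - x)⁻¹ - (b - 1) * (1 - p + x)⁻¹ - 4 * (a + b - 1) * x) x := by
    intro x hx
    have hux : 0 < p - x := by have := hx.2; linarith
    have hvx : 0 < 1 - p + x := by have := hx.1; linarith
    have h1 : HasDerivAt (fun x : ℝ => log (p - x)) (-1 / (p - x)) x := by
      have := ((hasDerivAt_const x p).sub (hasDerivAt_id x)).log hux.ne'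
      simpa using this
    have h2 : HasDerivAt (fun x : ℝ => log (1 - p + x)) (1 / (1 - p + x)) x := by
      have := ((hasDerivAt_const x (1 - p)).add (hasDerivAt_id x)).log hvx.ne'
      simpa using this
    have h3 : HasDerivAt (fun x : ℝ => x ^ 2) (2 * x) x := by
      simpa using hasDerivAt_pow 2 x
    have := ((((hasDerivAt_const x (log p)).sub h1).const_mul a).add
      (((hasDerivAt_const x (log (1 - p))).sub h2).const_mul (b - 1))).sub
      (h3.const_mul (2 * (a + b - 1)))
    refine this.congr_deriv ?_
    ring
  have hmono : MonotoneOn φ (Set.Icc 0 ε) := by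
    apply monotoneOn_of_deriv_nonneg (convex_Icc 0 ε)
    · exact fun x hx => (hder x hx).continuousAt.continuousWithinAt
    · intro x hx
      rw [interior_Icc] at hx
      exact (hder x (Set.mem_Icc_of_Ioo hx)).differentiableAt.differentiableWithinAt
    · intro x hx
      rw [interior_Icc] at hx
      rw [(hder x (Set.mem_Icc_of_Ioo hx)).deriv]
      have hux : 0 < p - x := by have := hx.2; linarith
      have hvx : 0 < 1 - p + x := by have := hx.1; linarith
      have hx0 : 0 ≤ x := hx.1.le
      have key : a * (1 - p + x) - (b - 1) * (p - x) = p + (a + b - 1) * x := by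
        linear_combination -hpa
      have heq : a * (p - x)⁻¹ - (b - 1) * (1 - p + x)⁻¹
          = (p + (a + b - 1) * x) / ((p - x) * (1 - p + x)) := by
        rw [← key]; field_simp
      rw [heq]
      have huv : (p - x) * (1 - p + x) ≤ 1 / 4 := by nlinarith [sq_nonneg (p - x - (1 - p + x))]
      have hnum : 0 ≤ p + (a + b - 1) * x := by nlinarith
      have h4 : 4 * (p + (a + b - 1) * x) ≤ (p + (a + b - 1) * x) / ((p - x) * (1 - p + x)) := by
        rw [le_div_iff₀ (by positivity)]
        nlinarith
      nlinarith
  have h0 : φ 0 = 0 := by simp [hφ]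
  have := hmono (Set.left_mem_Icc.2 hε0.le) (Set.right_mem_Icc.2 hε0.le) hε0.le
  rw [h0] at this
  simp only [hφ] at this
  linarith

lemma star_exp (a b p ε : ℝ) (ha : 1 ≤ a) (hb : 1 ≤ b)
    (hp : p = a / (a + b)) (hε0 : 0 < ε) (hεp : ε < p) (hp1 : p < 1) :
    exp (2 * (a + b - 1) * ε ^ 2) ≤
      (p / (p - ε)) ^ a * ((1 - p) / (1 - (p - ε))) ^ (b - 1) := by
  have hc : 0 < p - ε := by linarith
  have hp0 : 0 < p := by linarith
  have hq : 0 < (1 - p) / (1 - (p - ε)) := by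
    apply div_pos <;> linarith
  have ht : 0 < p / (p - ε) := div_pos hp0 hc
  rw [Real.rpow_def_of_pos ht, Real.rpow_def_of_pos hq, ← Real.exp_add]
  apply Real.exp_le_exp.2
  rw [Real.log_div hp0.ne' hc.ne', Real.log_div (by linarith : (0:ℝ) < 1 - p).ne'
    (by linarith : (0:ℝ) < 1 - (p - ε)).ne']
  have := star_ineq a b p ε ha hb hp hε0 hεp hp1
  have hrw : 1 - (p - ε) = 1 - p + ε := by ring
  rw [hrw]
  linarith

lemma pointwise_ineq (a b p ε : ℝ) (ha : 1 ≤ a) (hb : 1 ≤ b)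
    (hp : p = a / (a + b)) (hε0 : 0 < ε) (hεp : ε < p) (hp1 : p < 1)
    (C : ℝ) (hC : 0 ≤ C)
    (x : ℝ) (hx0 : 0 < x) (hxc : x ≤ p - ε) :
    C * x ^ (a - 1) * (1 - x) ^ (b - 1) ≤
      exp (-2 * (a + b - 1) * ε ^ 2) *
        ((p / (p - ε)) * (C * ((p / (p - ε)) * x) ^ (a - 1) *
          (1 - (p / (p - ε)) * x) ^ (b - 1))) := by
  set c := p - ε with hc
  set t := p / c with htdef
  set q := (1 - p) / (1 - c) with hqdef
  have hc0 : 0 < c := by simp [hc]; linarith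
  have hc1 : c < 1 := by simp [hc]; linarith
  have hp0 : 0 < p := by linarith
  have ht1 : 1 < t := by
    rw [htdef, lt_div_iff₀ hc0]; simp [hc]; linarith
  have ht0 : 0 < t := by linarith
  have htc : t * c = p := by rw [htdef]; field_simp
  have hq0 : 0 < q := div_pos (by linarith) (by linarith)
  have htx0 : 0 < t * x := mul_pos ht0 hx0
  have htx1 : t * x ≤ p := by
    calc t * x ≤ t * c := by nlinarith
    _ = p := htc
  have hM : q * (1 - x) ≤ 1 - t * x := by
    rw [hqdef, div_mul_eq_mul_div, div_le_iff₀ (by linarith : (0:ℝ) < 1 - c)]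
    nlinarith
  have h2 : q ^ (b - 1) * (1 - x) ^ (b - 1) ≤ (1 - t * x) ^ (b - 1) := by
    rw [← Real.mul_rpow hq0.le (by nlinarith : (0:ℝ) ≤ 1 - x)]
    exact Real.rpow_le_rpow (mul_nonneg hq0.le (by nlinarith)) hM (by linarith)
  have h1 : (t * x) ^ (a - 1) = t ^ (a - 1) * x ^ (a - 1) :=
    Real.mul_rpow ht0.le hx0.le
  have hta : t * t ^ (a - 1) = t ^ a := by
    have h := (Real.rpow_add ht0 1 (a - 1)).symm
    rw [Real.rpow_one] at h
    rw [h]; norm_num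
  set E := exp (-2 * (a + b - 1) * ε ^ 2) with hE
  have hE0 : 0 < E := exp_pos _
  have hone : 1 ≤ E * (t ^ a * q ^ (b - 1)) := by
    have hstar := star_exp a b p ε ha hb hp hε0 hεp hp1
    have : E * exp (2 * (a + b - 1) * ε ^ 2) = 1 := by
      rw [hE, ← Real.exp_add]; norm_num
    calc (1:ℝ) = E * exp (2 * (a + b - 1) * ε ^ 2) := this.symm
      _ ≤ E * (t ^ a * q ^ (b - 1)) := by
          apply mul_le_mul_of_nonneg_left _ hE0.le
          exact hstar
  have hx1 : (0:ℝ) ≤ x ^ (a - 1) := by positivity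
  have hx2 : (0:ℝ) ≤ (1 - x) ^ (b - 1) := Real.rpow_nonneg (by nlinarith) _
  calc C * x ^ (a - 1) * (1 - x) ^ (b - 1)
      = 1 * (C * x ^ (a - 1) * (1 - x) ^ (b - 1)) := (one_mul _).symm
    _ ≤ (E * (t ^ a * q ^ (b - 1))) * (C * x ^ (a - 1) * (1 - x) ^ (b - 1)) := by
        apply mul_le_mul_of_nonneg_right hone (mul_nonneg (mul_nonneg hC hx1) hx2)
    _ = E * (t * (C * (t ^ (a - 1) * x ^ (a - 1)) *
          (q ^ (b - 1) * (1 - x) ^ (b - 1)))) := by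
        rw [← hta]; ring
    _ ≤ E * (t * (C * (t ^ (a - 1) * x ^ (a - 1)) * (1 - t * x) ^ (b - 1))) := by
        apply mul_le_mul_of_nonneg_left _ hE0.le
        apply mul_le_mul_of_nonneg_left _ ht0.le
        apply mul_le_mul_of_nonneg_left h2 (mul_nonneg hC (by positivity))
    _ = E * (t * (C * (t * x) ^ (a - 1) * (1 - t * x) ^ (b - 1))) := by rw [h1]

lemma cont_rpow_left (a : ℝ) (ha : 1 ≤ a) : Continuous (fun x : ℝ => x ^ (a - 1)) :=
  continuous_iff_continuousAt.2 fun x =>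
    Real.continuousAt_rpow_const x (a - 1) (Or.inr (by linarith))

lemma cont_rpow_right (b : ℝ) (hb : 1 ≤ b) : Continuous (fun x : ℝ => (1 - x) ^ (b - 1)) :=
  (continuous_iff_continuousAt.2 fun x =>
    Real.continuousAt_rpow_const x (b - 1) (Or.inr (by linarith))).comp
    (continuous_const.sub continuous_id)

lemma beta_integral_eval (a b : ℝ) (ha : 1 ≤ a) (hb : 1 ≤ b) :
    ∫ x in Set.Ioo (0:ℝ) 1, x ^ (a - 1) * (1 - x) ^ (b - 1) =
      Real.Gamma a * Real.Gamma b / Real.Gamma (a + b) := by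
  have ha0 : (0:ℝ) < a := by linarith
  have hb0 : (0:ℝ) < b := by linarith
  have hab : (0:ℝ) < a + b := by linarith
  have hC := Complex.Gamma_mul_Gamma_eq_betaIntegral
    (s := (a:ℂ)) (t := (b:ℂ)) (by simpa using ha0) (by simpa using hb0)
  have hbeta : Complex.betaIntegral (a:ℂ) (b:ℂ) =
      ((∫ x in (0:ℝ)..1, x ^ (a - 1) * (1 - x) ^ (b - 1) : ℝ) : ℂ) := by
    rw [Complex.betaIntegral, ← intervalIntegral.integral_ofReal]
    apply intervalIntegral.integral_congr
    intro x hx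
    rw [Set.uIcc_of_le (by norm_num : (0:ℝ) ≤ 1)] at hx
    have hx0 : (0:ℝ) ≤ x := hx.1
    have hx1 : (0:ℝ) ≤ 1 - x := by linarith [hx.2]
    simp only []
    rw [Complex.ofReal_mul, Complex.ofReal_cpow hx0, Complex.ofReal_cpow hx1]
    push_cast
    ring
  have hIoo : (∫ x in (0:ℝ)..1, x ^ (a - 1) * (1 - x) ^ (b - 1)) =
      ∫ x in Set.Ioo (0:ℝ) 1, x ^ (a - 1) * (1 - x) ^ (b - 1) := by
    rw [intervalIntegral.integral_of_le (by norm_num : (0:ℝ) ≤ 1)]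
    exact integral_Ioc_eq_integral_Ioo
  rw [hbeta, hIoo] at hC
  have hgab : Complex.Gamma ((a:ℂ) + (b:ℂ)) = ((Real.Gamma (a+b) : ℝ) : ℂ) := by
    rw [← Complex.ofReal_add, Complex.Gamma_ofReal]
  rw [Complex.Gamma_ofReal, Complex.Gamma_ofReal, hgab, ← Complex.ofReal_mul,
    ← Complex.ofReal_mul] at hC
  have := Complex.ofReal_inj.1 hC
  have hg : Real.Gamma (a + b) ≠ 0 := (Real.Gamma_pos_of_pos hab).ne'
  field_simp
  linarith [this]

lemma beta_lintegral_one (a b : ℝ) (ha : 1 ≤ a) (hb : 1 ≤ b) :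
    ∫⁻ x, ENNReal.ofReal (betaPDFReal a b x) = 1 := by
  have ha0 : (0:ℝ) < a := by linarith
  have hb0 : (0:ℝ) < b := by linarith
  have hab : (0:ℝ) < a + b := by linarith
  set C := Real.Gamma (a + b) / (Real.Gamma a * Real.Gamma b) with hCdef
  have hC0 : 0 < C := div_pos (Real.Gamma_pos_of_pos hab)
    (mul_pos (Real.Gamma_pos_of_pos ha0) (Real.Gamma_pos_of_pos hb0))
  have hind : (fun x => ENNReal.ofReal (betaPDFReal a b x)) =
      (Set.Ioo (0:ℝ) 1).indicator
        (fun x => ENNReal.ofReal (C * x ^ (a - 1) * (1 - x) ^ (b - 1))) := by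
    funext x
    by_cases hx : x ∈ Set.Ioo (0:ℝ) 1
    · rw [Set.indicator_of_mem hx, betaPDFReal, if_pos hx]
    · rw [Set.indicator_of_notMem hx, betaPDFReal, if_neg hx, ENNReal.ofReal_zero]
  rw [hind, lintegral_indicator measurableSet_Ioo]
  have hcont : Continuous (fun x : ℝ => C * x ^ (a - 1) * (1 - x) ^ (b - 1)) :=
    ((continuous_const.mul (cont_rpow_left a ha)).mul (cont_rpow_right b hb))
  have hint : IntegrableOn (fun x : ℝ => C * x ^ (a - 1) * (1 - x) ^ (b - 1))
      (Set.Ioo (0:ℝ) 1) := (hcont.integrableOn_Icc).mono_set Set.Ioo_subset_Icc_self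
  have hnn : 0 ≤ᵐ[volume.restrict (Set.Ioo (0:ℝ) 1)]
      (fun x : ℝ => C * x ^ (a - 1) * (1 - x) ^ (b - 1)) := by
    refine (ae_restrict_iff' measurableSet_Ioo).2 (Filter.Eventually.of_forall fun x hx => ?_)
    have h1 : (0:ℝ) ≤ x ^ (a - 1) := Real.rpow_nonneg hx.1.le _
    have h2 : (0:ℝ) ≤ (1 - x) ^ (b - 1) := Real.rpow_nonneg (by linarith [hx.2]) _
    positivity
  rw [← ofReal_integral_eq_lintegral_ofReal hint hnn]
  have : ∫ x in Set.Ioo (0:ℝ) 1, C * x ^ (a - 1) * (1 - x) ^ (b - 1) = 1 := by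
    simp_rw [mul_assoc]
    rw [integral_const_mul, beta_integral_eval a b ha hb, hCdef]
    field_simp
  rw [this, ENNReal.ofReal_one]

end Aux

/-- Upper tail bound for the Beta distribution (Lemma 1 of the paper, lower tail):
for `X ~ Beta(a,b)` with `a, b ≥ 1` and `p = a/(a+b)`, for any `ε ∈ (0, p)`,
`Pr(X ≤ p - ε) ≤ exp (-2(a+b-1)ε²)`. -/
theorem beta_lower_tail_bound
    (a b : ℝ) (ha : 1 ≤ a) (hb : 1 ≤ b)
    (p : ℝ) (hp : p = a / (a + b))
    (ε : ℝ) (hε : ε ∈ Set.Ioo 0 p) :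
    betaMeasure a b {x | x ≤ p - ε} ≤
      ENNReal.ofReal (Real.exp (-2 * (a + b - 1) * ε ^ 2)) := by
  obtain ⟨hε0, hεp⟩ := hε
  have ha0 : (0:ℝ) < a := by linarith
  have hb0 : (0:ℝ) < b := by linarith
  have hab : (0:ℝ) < a + b := by linarith
  have hp0 : 0 < p := lt_trans hε0 hεp
  have hp1 : p < 1 := by
    rw [hp, div_lt_one hab]; linarith
  set c := p - ε with hcdef
  have hc0 : 0 < c := by simp [hcdef]; linarith
  have hc1 : c < 1 := by simp [hcdef]; linarith
  set t := p / c with htdef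
  have ht0 : 0 < t := div_pos hp0 hc0
  have htc : t * c = p := by rw [htdef]; field_simp
  set C := Real.Gamma (a + b) / (Real.Gamma a * Real.Gamma b) with hCdef
  have hC0 : 0 < C := div_pos (Real.Gamma_pos_of_pos hab)
    (mul_pos (Real.Gamma_pos_of_pos ha0) (Real.Gamma_pos_of_pos hb0))
  set G : ℝ → ℝ := fun y => C * y ^ (a - 1) * (1 - y) ^ (b - 1) with hGdef
  set f : ℝ → ENNReal := fun y => ENNReal.ofReal (G y) with hfdef
  have hGcont : Continuous G :=
    (continuous_const.mul (cont_rpow_left a ha)).mul (cont_rpow_right b hb)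
  have hf : Measurable f := ENNReal.measurable_ofReal.comp hGcont.measurable
  set E := Real.exp (-2 * (a + b - 1) * ε ^ 2) with hEdef
  -- Step 1: the measure as a set lintegral over Ioc 0 c
  have hmeas : MeasurableSet {x : ℝ | x ≤ c} := measurableSet_Iic
  have h1 : betaMeasure a b {x | x ≤ c} = ∫⁻ x in Set.Ioc 0 c, f x := by
    rw [betaMeasure, withDensity_apply _ hmeas]
    have hcong : ∀ x ∈ {x : ℝ | x ≤ c}, ENNReal.ofReal (betaPDFReal a b x) =
        (Set.Ioc (0:ℝ) c).indicator f x := by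
      intro x hx
      simp only [Set.mem_setOf_eq] at hx
      by_cases hx0 : 0 < x
      · have hmem : x ∈ Set.Ioc (0:ℝ) c := ⟨hx0, hx⟩
        rw [Set.indicator_of_mem hmem, betaPDFReal,
          if_pos (Set.mem_Ioo.mpr ⟨hx0, (by linarith : x < 1)⟩)]
      · have hmem : x ∉ Set.Ioc (0:ℝ) c := fun h => hx0 h.1
        rw [Set.indicator_of_notMem hmem, betaPDFReal, if_neg, ENNReal.ofReal_zero]
        exact fun h => hx0 (Set.mem_Ioo.mp h).1
    rw [setLIntegral_congr_fun hmeas hcong,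
      lintegral_indicator measurableSet_Ioc, Measure.restrict_restrict measurableSet_Ioc]
    have hinter : Set.Ioc (0:ℝ) c ∩ {x : ℝ | x ≤ c} = Set.Ioc (0:ℝ) c :=
      Set.inter_eq_left.2 fun x hx => hx.2
    rw [hinter]
  -- Step 2: pointwise bound and pulling out the constant
  have h2 : ∫⁻ x in Set.Ioc 0 c, f x ≤
      ENNReal.ofReal E * ∫⁻ x in Set.Ioc 0 c, ENNReal.ofReal (t * G (t * x)) := by
    rw [← lintegral_const_mul' _ _ ENNReal.ofReal_ne_top]
    apply setLIntegral_mono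
    · apply Measurable.const_mul
      apply ENNReal.measurable_ofReal.comp
      exact (continuous_const.mul (hGcont.comp (continuous_const.mul continuous_id))).measurable
    · intro x hx
      rw [hfdef, ← ENNReal.ofReal_mul (Real.exp_nonneg _)]
      apply ENNReal.ofReal_le_ofReal
      have := pointwise_ineq a b p ε ha hb hp hε0 hεp hp1 C hC0.le x hx.1 hx.2
      simpa [hGdef, mul_assoc, mul_comm, mul_left_comm] using this
  -- Step 3: change of variables
  have h3 : ∫⁻ x in Set.Ioc 0 c, ENNReal.ofReal (t * G (t * x)) =
      ∫⁻ y in Set.Ioc 0 p, f y := by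
    have hmap : volume.restrict (Set.Ioc 0 p) =
        ENNReal.ofReal t • Measure.map (fun x => t * x) (volume.restrict (Set.Ioc 0 c)) := by
      conv_lhs => rw [← Real.smul_map_volume_mul_left ht0.ne']
      rw [abs_of_pos ht0, Measure.restrict_smul,
        Measure.restrict_map (measurable_const_mul t) measurableSet_Ioc]
      congr 2
      rw [show (fun x => t * x) ⁻¹' Set.Ioc 0 p = Set.Ioc (0/t) (p/t) from
        Set.preimage_const_mul_Ioc₀ 0 p ht0]
      rw [zero_div]
      congr 1
      rw [htdef]
      field_simp
    calc ∫⁻ x in Set.Ioc 0 c, ENNReal.ofReal (t * G (t * x))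
        = ∫⁻ x in Set.Ioc 0 c, ENNReal.ofReal t * f (t * x) := by
          apply lintegral_congr fun x => ?_
          rw [hfdef, ← ENNReal.ofReal_mul ht0.le]
      _ = ENNReal.ofReal t * ∫⁻ x in Set.Ioc 0 c, f (t * x) :=
          lintegral_const_mul' _ _ ENNReal.ofReal_ne_top
      _ = ENNReal.ofReal t * ∫⁻ y, f y ∂(Measure.map (fun x => t * x)
            (volume.restrict (Set.Ioc 0 c))) := by
          rw [lintegral_map hf (measurable_const_mul t)]
      _ = ∫⁻ y in Set.Ioc 0 p, f y := by
          rw [hmap, lintegral_smul_measure, smul_eq_mul]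
  -- Step 4: the tail integral is at most the total mass, which is 1
  have h4 : ∫⁻ y in Set.Ioc 0 p, f y ≤ 1 := by
    have hsub : ∀ y ∈ Set.Ioc (0:ℝ) p, f y = ENNReal.ofReal (betaPDFReal a b y) := by
      intro y hy
      rw [betaPDFReal, if_pos (Set.mem_Ioo.mpr ⟨hy.1, (by linarith [hy.2] : y < 1)⟩)]
    rw [setLIntegral_congr_fun measurableSet_Ioc hsub]
    calc ∫⁻ y in Set.Ioc 0 p, ENNReal.ofReal (betaPDFReal a b y)
        ≤ ∫⁻ y, ENNReal.ofReal (betaPDFReal a b y) :=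
          lintegral_mono' Measure.restrict_le_self (le_refl _)
      _ = 1 := beta_lintegral_one a b ha hb
  calc betaMeasure a b {x | x ≤ c}
      = ∫⁻ x in Set.Ioc 0 c, f x := h1
    _ ≤ ENNReal.ofReal E * ∫⁻ x in Set.Ioc 0 c, ENNReal.ofReal (t * G (t * x)) := h2
    _ = ENNReal.ofReal E * ∫⁻ y in Set.Ioc 0 p, f y := by rw [h3]
    _ ≤ ENNReal.ofReal E * 1 := by gcongr
    _ = ENNReal.ofReal E := mul_one _
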